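/- Let G be a finite group, N ⊴ G with G/N cyclic, and let τ be an irreducible complex representation of G such that τ|_N is isotypic with irreducible constituent σ and the stabilizer of σ in G is all of G. Then τ ≅ σ̃ ⊗ χ for some extension σ̃ of σ to G and some character χ of G/N; in particular, τ|_N is irreducible. -/

import Mathlib

theorem stmt_14 (G : Type*) [Group G] [Finite G] (N : Subgroup G) (hN : N.Normal)
    [IsCyclic (G ⧸ N)]
    (V W : Type*) [AddCommGroup V] [Module ℂ V] [FiniteDimensional ℂ V]
    [AddCommGroup W] [Module ℂ W] [FiniteDimensional ℂ W]
    (σ : Representation ℂ N V) (τ : Representation ℂ G W)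
    -- σ is irreducible
    (hσirr : Nontrivial V ∧ ∀ U : Submodule ℂ V, (∀ (n : N) (v : V), v ∈ U → σ n v ∈ U) →
      U = ⊥ ∨ U = ⊤)
    -- τ is irreducible
    (hτirr : Nontrivial W ∧ ∀ U : Submodule ℂ W, (∀ (g : G) (w : W), w ∈ U → τ g w ∈ U) →
      U = ⊥ ∨ U = ⊤)
    -- the stabilizer of σ under G-conjugation is all of G
    (hstab : ∀ g : G, ∃ e : V ≃ₗ[ℂ] V, ∀ (n : N) (v : V),
      e (σ (⟨g⁻¹ * (n : G) * g, by simpa using hN.conj_mem _ n.2 g⁻¹⟩ : N) v) = σ n (e v))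
    -- τ|_N is σ-isotypic: it is equivalent to a direct sum of m copies of σ
    (hisotypic : ∃ (m : ℕ) (e : W ≃ₗ[ℂ] (Fin m → V)), ∀ (n : N) (w : W),
      e (τ (n : G) w) = fun i => σ n (e w i)) :
    (∃ (σt : Representation ℂ G V) (χ : G →* ℂˣ),
      (∀ n : N, σt (n : G) = σ n) ∧ (∀ n : N, χ (n : G) = 1) ∧
      ∃ e : W ≃ₗ[ℂ] V, ∀ (g : G) (w : W), e (τ g w) = (χ g : ℂ) • σt g (e w)) ∧
    -- in particular τ|_N is irreducible
    (∀ U : Submodule ℂ W, (∀ (n : N) (w : W), w ∈ U → τ (n : G) w ∈ U) → U = ⊥ ∨ U = ⊤) := by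
  obtain ⟨hVnt, hσ⟩ := hσirr
  obtain ⟨hWnt, hτ⟩ := hτirr
  obtain ⟨m, e₀, he₀⟩ := hisotypic
  -- m ≠ 0
  have hm : 0 < m := by
    rcases Nat.eq_zero_or_pos m with rfl | h
    · exact absurd (e₀.toEquiv.subsingleton) (not_subsingleton W)
    · exact h
  set i₀ : Fin m := ⟨0, hm⟩ with hi₀
  -- generator of G/N
  obtain ⟨z, hz⟩ := IsCyclic.exists_generator (α := G ⧸ N)
  obtain ⟨g₀, rfl⟩ := QuotientGroup.mk_surjective z
  obtain ⟨A, hA⟩ := hstab g₀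
  have hAsymm : ∀ (n : N) (w : V), A.symm (σ n w)
      = σ (⟨g₀⁻¹ * (n : G) * g₀, by simpa using hN.conj_mem _ n.2 g₀⁻¹⟩ : N) (A.symm w) := by
    intro n w
    apply A.injective
    rw [hA]
    simp
  have hmul : ∀ (a b : G) (w : W), τ (a * b) w = τ a (τ b w) := by
    intro a b w
    rw [map_mul]
    rfl
  -- the space of N-intertwiners V → W
  let E : Submodule ℂ (V →ₗ[ℂ] W) :=
    { carrier := {T | ∀ (n : N) (v : V), T (σ n v) = τ (n : G) (T v)}
      add_mem' := by intro a b ha hb n v; simp [ha n v, hb n v]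
      zero_mem' := by intro n v; simp
      smul_mem' := by intro c a ha n v; simp [ha n v] }
  -- a nonzero element of E
  let T₀ : V →ₗ[ℂ] W := e₀.symm.toLinearMap ∘ₗ LinearMap.single ℂ (fun _ : Fin m => V) i₀
  have hsingle : ∀ (n : N) (v : V),
      (fun i => σ n ((Pi.single i₀ v : Fin m → V) i)) = (Pi.single i₀ (σ n v) : Fin m → V) := by
    intro n v
    funext i
    by_cases h : i = i₀
    · subst h; simp
    · simp [Pi.single_eq_of_ne h]
  have hT₀mem : T₀ ∈ E := by
    intro n v
    have h1 : e₀ (T₀ v) = Pi.single i₀ v := by simp [T₀, LinearMap.single_apply]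
    have h2 : e₀ (τ (n : G) (T₀ v)) = fun i => σ n (e₀ (T₀ v) i) := he₀ n (T₀ v)
    apply e₀.injective
    rw [h2, h1, hsingle]
    simp [T₀, LinearMap.single_apply]
  have hT₀ne : T₀ ≠ 0 := by
    obtain ⟨v, hv⟩ := exists_ne (0 : V)
    intro h
    apply hv
    have : T₀ v = 0 := by rw [h]; rfl
    have h2 : e₀.symm (Pi.single i₀ v) = 0 := by simpa [T₀, LinearMap.single_apply] using this
    have h3 : (Pi.single i₀ v : Fin m → V) = 0 := by
      apply e₀.symm.injective; simpa using h2
    have := congrFun h3 i₀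
    simpa using this
  haveI : Nontrivial ↥E := ⟨⟨T₀, hT₀mem⟩, 0, fun h => hT₀ne (congrArg Subtype.val h)⟩
  -- the twisting operator on E
  have hΦmem : ∀ T ∈ E, (τ g₀ ∘ₗ T ∘ₗ (A.symm : V →ₗ[ℂ] V)) ∈ E := by
    intro T hT n v
    simp only [LinearMap.comp_apply, LinearEquiv.coe_coe]
    rw [hAsymm, hT, ← hmul, ← hmul]
    congr 1
    group
  let Φ : Module.End ℂ ↥E :=
    { toFun := fun T => ⟨τ g₀ ∘ₗ (T : V →ₗ[ℂ] W) ∘ₗ (A.symm : V →ₗ[ℂ] V), hΦmem _ T.2⟩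
      map_add' := by
        intro a b; apply Subtype.ext; ext v
        simp
      map_smul' := by
        intro c a; apply Subtype.ext; ext v
        simp }
  obtain ⟨μ, hμ⟩ := Module.End.exists_eigenvalue Φ
  obtain ⟨T, hTeig⟩ := hμ.exists_hasEigenvector
  have hTl : (T : V →ₗ[ℂ] W) ∈ E := T.2
  have hTne : (T : V →ₗ[ℂ] W) ≠ 0 := by
    intro h
    exact hTeig.2 (Subtype.ext h)
  have heig : ∀ v : V, τ g₀ ((T : V →ₗ[ℂ] W) (A.symm v)) = μ • (T : V →ₗ[ℂ] W) v := by
    intro v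
    have := hTeig.apply_eq_smul
    have h2 := congrArg Subtype.val this
    exact congrFun (congrArg (fun f => f.toFun) h2) v
  set Tl : V →ₗ[ℂ] W := (T : V →ₗ[ℂ] W) with hTldef
  -- μ ≠ 0
  have hτinv : ∀ (g : G) (w : W), τ g⁻¹ (τ g w) = w := by
    intro g w
    rw [← hmul]
    simp
  have hμne : μ ≠ 0 := by
    intro h
    apply hTne
    ext v
    have := heig (A v)
    rw [h, zero_smul] at this
    have h2 := congrArg (τ g₀⁻¹) this
    rw [hτinv, map_zero] at h2
    simpa using h2
  -- Tl is injective
  have hker : LinearMap.ker Tl = ⊥ := by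
    rcases hσ (LinearMap.ker Tl) (by
      intro n v hv
      rw [LinearMap.mem_ker] at hv ⊢
      rw [hTl n v, hv, map_zero]) with h | h
    · exact h
    · exact absurd (LinearMap.ker_eq_top.mp h) hTne
  -- Tl is surjective
  set U := LinearMap.range Tl with hUdef
  have hUg₀ : ∀ w ∈ U, τ g₀ w ∈ U := by
    rintro w ⟨v, rfl⟩
    refine ⟨μ • A v, ?_⟩
    rw [map_smul, ← heig (A v)]
    simp
  have hUg₀inv : ∀ w ∈ U, τ g₀⁻¹ w ∈ U := by
    rintro w ⟨v, rfl⟩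
    refine ⟨μ⁻¹ • A.symm v, ?_⟩
    have := congrArg (τ g₀⁻¹) (heig v)
    rw [hτinv] at this
    rw [map_smul, this, map_smul, smul_smul, inv_mul_cancel₀ hμne, one_smul]
  have hUN : ∀ (n : N) (w : W), w ∈ U → τ (n : G) w ∈ U := by
    rintro n w ⟨v, rfl⟩
    exact ⟨σ n v, hTl n v⟩
  have hUmul : ∀ a b : G, (∀ w ∈ U, τ a w ∈ U) → (∀ w ∈ U, τ b w ∈ U) →
      ∀ w ∈ U, τ (a * b) w ∈ U := by
    intro a b ha hb w hw
    rw [hmul]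
    exact ha _ (hb _ hw)
  let S : Subgroup G :=
    { carrier := {g | (∀ w ∈ U, τ g w ∈ U) ∧ (∀ w ∈ U, τ g⁻¹ w ∈ U)}
      one_mem' := ⟨by intro w hw; simpa using hw, by intro w hw; simpa using hw⟩
      mul_mem' := by
        rintro a b ⟨ha1, ha2⟩ ⟨hb1, hb2⟩
        refine ⟨hUmul a b ha1 hb1, ?_⟩
        rw [mul_inv_rev]
        exact hUmul _ _ hb2 ha2
      inv_mem' := by
        rintro a ⟨h1, h2⟩
        exact ⟨h2, by simpa using h1⟩ }
  have hg₀S : g₀ ∈ S := ⟨hUg₀, hUg₀inv⟩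
  have hNS : ∀ n : G, n ∈ N → n ∈ S := by
    intro n hn
    refine ⟨hUN ⟨n, hn⟩, ?_⟩
    have : n⁻¹ ∈ N := N.inv_mem hn
    exact hUN ⟨n⁻¹, this⟩
  have hS : ∀ g : G, g ∈ S := by
    intro g
    obtain ⟨k, hk⟩ := hz ((g : G) : G ⧸ N)
    have hν : (g₀ ^ k)⁻¹ * g ∈ N := by
      rw [← QuotientGroup.eq]
      rw [← hk]
      simp
    have hgeq : g = g₀ ^ k * ((g₀ ^ k)⁻¹ * g) := by group
    rw [hgeq]
    exact S.mul_mem (S.zpow_mem hg₀S k) (hNS _ hν)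
  have hUtop : U = ⊤ := by
    rcases hτ U (fun g w hw => (hS g).1 w hw) with h | h
    · exfalso
      exact hTne (LinearMap.range_eq_bot.mp h)
    · exact h
  -- the equivalence
  have hbij : Function.Bijective Tl :=
    ⟨LinearMap.ker_eq_bot.mp hker, LinearMap.range_eq_top.mp hUtop⟩
  let eT : V ≃ₗ[ℂ] W := LinearEquiv.ofBijective Tl hbij
  have heT : ∀ v : V, eT v = Tl v := fun v => rfl
  constructor
  · -- main statement with χ = 1
    refine ⟨{ toFun := fun g => eT.symm.toLinearMap ∘ₗ τ g ∘ₗ eT.toLinearMap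
              map_one' := by ext v; simp
              map_mul' := by
                intro a b
                ext v
                simp [hmul] }, 1, ?_, ?_, ?_⟩
    · intro n
      ext v
      simp only [MonoidHom.coe_mk, OneHom.coe_mk, LinearMap.comp_apply, LinearEquiv.coe_coe]
      rw [LinearEquiv.symm_apply_eq]
      show τ (n : G) (Tl v) = Tl (σ n v)
      exact (hTl n v).symm
    · intro n; rfl
    · refine ⟨eT.symm, ?_⟩
      intro g w
      simp
  · -- irreducibility of τ|N
    intro U' hU'
    rcases hσ (U'.comap eT.toLinearMap) (by
      intro n v hv
      rw [Submodule.mem_comap] at hv ⊢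
      show Tl (σ n v) ∈ U'
      rw [hTl]
      exact hU' n (Tl v) hv) with h | h
    · left
      rw [Submodule.eq_bot_iff]
      intro w hw
      have h1 : eT.symm w ∈ U'.comap eT.toLinearMap := by
        rw [Submodule.mem_comap]
        simpa using hw
      rw [h, Submodule.mem_bot] at h1
      have := congrArg eT h1
      simpa using this
    · right
      rw [Submodule.eq_top_iff']
      intro w
      have h1 : eT.symm w ∈ U'.comap eT.toLinearMap := by rw [h]; trivial
      rw [Submodule.mem_comap] at h1
      simpa using h1
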